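/- Let G be a finite simple graph whose vertex set is V ∪ {s, t} with s ≠ t, s and t not adjacent, and each vertex of V adjacent to at most one of s and t. Let y : V → {0,1} be any labeling of the non-terminal vertices, and consider the s-t cut with parts V₁ = {s} ∪ {v ∈ V : y v = 1} and V₂ = {t} ∪ {v ∈ V : y v = 0}. Then the number of edges of G crossing the cut equals (the number of vertices v ∈ V adjacent to s with y v = 0) + (the number of vertices v ∈ V adjacent to t with y v = 1) + (the number of edges {u,v} of G with u, v ∈ V and y u ≠ y v). In particular, the cardinality of the cut equals the number of label flips plus the total error of the corresponding unit-weight label-flipping instance. -/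
import Mathlib


open Finset

open scoped Classical in
/-- In the reduction graph, the cardinality of the s-t cut induced by a
binary labeling of the non-terminal vertices equals the number of label flips plus
the total error of the unit-weight label-flipping instance. -/
theorem cut_card_eq_flips_plus_error {α : Type*} [Fintype α] [DecidableEq α]
    (G : SimpleGraph α) [DecidableRel G.Adj]
    (src snk : α) (V : Finset α)
    (hst : src ≠ snk) (hsV : src ∉ V) (htV : snk ∉ V)
    (hcover : ∀ x : α, x = src ∨ x = snk ∨ x ∈ V)
    (hadj : ¬ G.Adj src snk)
    (hone : ∀ v ∈ V, ¬ (G.Adj src v ∧ G.Adj snk v))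
    (y : α → ℝ) (hy : ∀ v ∈ V, y v = 0 ∨ y v = 1) :
    (G.edgeFinset.filter (fun e =>
        ∃ u ∈ insert src (V.filter (fun v => y v = 1)),
        ∃ w ∈ insert snk (V.filter (fun v => y v = 0)), e = s(u, w))).card =
    (V.filter (fun v => G.Adj src v ∧ y v = 0)).card
      + (V.filter (fun v => G.Adj snk v ∧ y v = 1)).card
      + (G.edgeFinset.filter (fun e =>
          ∃ u ∈ V, ∃ w ∈ V, e = s(u, w) ∧ y u ≠ y w)).card := by
  classical
  set A := G.edgeFinset.filter (fun e => ∃ w ∈ V, e = s(src, w) ∧ y w = 0) with hA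
  set B := G.edgeFinset.filter (fun e => ∃ w ∈ V, e = s(snk, w) ∧ y w = 1) with hB
  set C := G.edgeFinset.filter (fun e =>
      ∃ u ∈ V, ∃ w ∈ V, e = s(u, w) ∧ y u ≠ y w) with hC
  have hsplit : G.edgeFinset.filter (fun e =>
      ∃ u ∈ insert src (V.filter (fun v => y v = 1)),
      ∃ w ∈ insert snk (V.filter (fun v => y v = 0)), e = s(u, w)) = A ∪ B ∪ C := by
    ext e
    simp only [hA, hB, hC, mem_filter, mem_union, mem_insert, mem_filter]
    constructor
    · rintro ⟨he, u, hu, w, hw, rfl⟩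
      have hadj' : G.Adj u w := by rwa [SimpleGraph.mem_edgeFinset, SimpleGraph.mem_edgeSet] at he
      rcases hu with rfl | ⟨huV, hu1⟩
      · rcases hw with rfl | ⟨hwV, hw0⟩
        · exact absurd hadj' hadj
        · exact Or.inl (Or.inl ⟨he, w, hwV, rfl, hw0⟩)
      · rcases hw with rfl | ⟨hwV, hw0⟩
        · exact Or.inl (Or.inr ⟨he, u, huV, Sym2.eq_swap, hu1⟩)
        · refine Or.inr ⟨he, u, huV, w, hwV, rfl, ?_⟩
          rw [hu1, hw0]; norm_num
    · rintro ((⟨he, w, hwV, rfl, hw0⟩ | ⟨he, w, hwV, rfl, hw1⟩) | ⟨he, u, huV, w, hwV, rfl, hne⟩)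
      · exact ⟨he, src, Or.inl rfl, w, Or.inr ⟨hwV, hw0⟩, rfl⟩
      · exact ⟨he, w, Or.inr ⟨hwV, hw1⟩, snk, Or.inl rfl, Sym2.eq_swap⟩
      · rcases hy u huV with hu0 | hu1
        · have hw1 : y w = 1 := (hy w hwV).resolve_left (fun h => hne (hu0.trans h.symm))
          exact ⟨he, w, Or.inr ⟨hwV, hw1⟩, u, Or.inr ⟨huV, hu0⟩, Sym2.eq_swap⟩
        · have hw0 : y w = 0 := (hy w hwV).resolve_right (fun h => hne (hu1.trans h.symm))
          exact ⟨he, u, Or.inr ⟨huV, hu1⟩, w, Or.inr ⟨hwV, hw0⟩, rfl⟩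
  have hdAB : Disjoint A B := by
    rw [Finset.disjoint_left]
    intro e ha hb
    rw [hA, mem_filter] at ha
    rw [hB, mem_filter] at hb
    obtain ⟨he, w, hwV, rfl, hw0⟩ := ha
    obtain ⟨_, w', hw'V, heq, hw'1⟩ := hb
    rw [Sym2.eq_iff] at heq
    rcases heq with ⟨h1, h2⟩ | ⟨h1, h2⟩
    · exact hst h1
    · exact hsV (h1.symm ▸ hw'V)
  have hdC : Disjoint (A ∪ B) C := by
    rw [Finset.disjoint_left]
    intro e hab hc
    rw [mem_union, hA, hB, mem_filter, mem_filter] at hab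
    rw [hC, mem_filter] at hc
    obtain ⟨_, u, huV, w', hw'V, heq, _⟩ := hc
    rcases hab with ⟨he, w, hwV, rfl, hw0⟩ | ⟨he, w, hwV, rfl, hw1⟩ <;>
    · rw [Sym2.eq_iff] at heq
      rcases heq with ⟨h1, _⟩ | ⟨h1, _⟩
      · first | exact hsV (h1 ▸ huV) | exact htV (h1 ▸ huV)
      · first | exact hsV (h1 ▸ hw'V) | exact htV (h1 ▸ hw'V)
  have hcardA : (V.filter (fun v => G.Adj src v ∧ y v = 0)).card = A.card := by
    apply Finset.card_bij (fun v _ => s(src, v))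
    · rintro v hv
      rw [mem_filter] at hv
      rw [hA, mem_filter]
      exact ⟨by rw [SimpleGraph.mem_edgeFinset, SimpleGraph.mem_edgeSet]; exact hv.2.1,
        v, hv.1, rfl, hv.2.2⟩
    · rintro u hu v hv heq
      rw [mem_filter] at hu hv
      rw [Sym2.eq_iff] at heq
      rcases heq with ⟨_, h⟩ | ⟨h1, _⟩
      · exact h
      · exact absurd (h1 ▸ hv.1) hsV
    · rintro e he
      rw [hA, mem_filter] at he
      obtain ⟨he, w, hwV, rfl, hw0⟩ := he
      have : G.Adj src w := by rwa [SimpleGraph.mem_edgeFinset, SimpleGraph.mem_edgeSet] at he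
      exact ⟨w, mem_filter.mpr ⟨hwV, this, hw0⟩, rfl⟩
  have hcardB : (V.filter (fun v => G.Adj snk v ∧ y v = 1)).card = B.card := by
    apply Finset.card_bij (fun v _ => s(snk, v))
    · rintro v hv
      rw [mem_filter] at hv
      rw [hB, mem_filter]
      exact ⟨by rw [SimpleGraph.mem_edgeFinset, SimpleGraph.mem_edgeSet]; exact hv.2.1,
        v, hv.1, rfl, hv.2.2⟩
    · rintro u hu v hv heq
      rw [mem_filter] at hu hv
      rw [Sym2.eq_iff] at heq
      rcases heq with ⟨_, h⟩ | ⟨h1, _⟩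
      · exact h
      · exact absurd (h1 ▸ hv.1) htV
    · rintro e he
      rw [hB, mem_filter] at he
      obtain ⟨he, w, hwV, rfl, hw1⟩ := he
      have : G.Adj snk w := by rwa [SimpleGraph.mem_edgeFinset, SimpleGraph.mem_edgeSet] at he
      exact ⟨w, mem_filter.mpr ⟨hwV, this, hw1⟩, rfl⟩
  rw [hsplit, Finset.card_union_of_disjoint hdC, Finset.card_union_of_disjoint hdAB,
    hcardA, hcardB]
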